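/- If Φ : ℝ^{2n} → ℝ^{2n} is a singular (non-invertible) linear map, then ‖Φ*ω₀ − ω₀‖₂ ≥ 1. -/
import Mathlib

/-- The standard symplectic form `ω₀` on `ℝ^{2n}`, coordinates indexed by `Fin n × Fin 2`. -/
def omega0 (n : ℕ) (u v : Fin n × Fin 2 → ℝ) : ℝ :=
  ∑ j : Fin n, (u (j, 0) * v (j, 1) - u (j, 1) * v (j, 0))

/-- The Euclidean norm of a 2-covector on `ℝ^{2n}`. -/
noncomputable def eucNorm2 (n : ℕ)
    (ω : (Fin n × Fin 2 → ℝ) → (Fin n × Fin 2 → ℝ) → ℝ) : ℝ :=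
  Real.sqrt ((1 / 2) * ∑ i : Fin n × Fin 2, ∑ j : Fin n × Fin 2,
    (ω (Pi.single i 1) (Pi.single j 1)) ^ 2)

/-- `omega0` as a bilinear map. -/
def omegaBilin (n : ℕ) : (Fin n × Fin 2 → ℝ) →ₗ[ℝ] (Fin n × Fin 2 → ℝ) →ₗ[ℝ] ℝ :=
  LinearMap.mk₂ ℝ (omega0 n)
    (fun u u' v => by
      simp only [omega0, Pi.add_apply, ← Finset.sum_add_distrib]
      exact Finset.sum_congr rfl fun j _ => by ring)
    (fun c u v => by
      simp only [omega0, Pi.smul_apply, smul_eq_mul, Finset.mul_sum]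
      exact Finset.sum_congr rfl fun j _ => by ring)
    (fun u v v' => by
      simp only [omega0, Pi.add_apply, ← Finset.sum_add_distrib]
      exact Finset.sum_congr rfl fun j _ => by ring)
    (fun c u v => by
      simp only [omega0, Pi.smul_apply, smul_eq_mul, Finset.mul_sum]
      exact Finset.sum_congr rfl fun j _ => by ring)

/-- Bessel-type inequality for two orthonormal vectors. -/
lemma bessel_two {m : Type*} [Fintype m] (r v w : m → ℝ)
    (hv : ∑ i, v i ^ 2 = 1) (hw : ∑ i, w i ^ 2 = 1) (hvw : ∑ i, v i * w i = 0) :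
    (∑ i, r i * v i) ^ 2 + (∑ i, r i * w i) ^ 2 ≤ ∑ i, r i ^ 2 := by
  set a := ∑ i, r i * v i with ha
  set b := ∑ i, r i * w i with hb
  have h0 : 0 ≤ ∑ i, (r i - a * v i - b * w i) ^ 2 :=
    Finset.sum_nonneg fun i _ => sq_nonneg _
  have key : ∀ i, (r i - a * v i - b * w i) ^ 2
      = r i ^ 2 - (2*a) * (r i * v i) - (2*b) * (r i * w i)
        + a ^ 2 * v i ^ 2 + b ^ 2 * w i ^ 2 + (2*a*b) * (v i * w i) := fun i => by ring
  have hexp : ∑ i, (r i - a * v i - b * w i) ^ 2 = ∑ i, r i ^ 2 - a ^ 2 - b ^ 2 := by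
    simp only [key, Finset.sum_add_distrib, Finset.sum_sub_distrib, ← Finset.mul_sum]
    rw [← ha, ← hb, hv, hw, hvw]
    ring
  rw [hexp] at h0
  linarith

/-- If `Φ : ℝ^{2n} → ℝ^{2n}` is a singular linear map, then `‖Φ*ω₀ − ω₀‖₂ ≥ 1`. -/
theorem one_le_eucNorm_pullback_sub_of_singular (n : ℕ)
    (Φ : (Fin n × Fin 2 → ℝ) →ₗ[ℝ] (Fin n × Fin 2 → ℝ))
    (hΦ : ¬ Function.Injective Φ) :
    1 ≤ eucNorm2 n (fun u v => omega0 n (Φ u) (Φ v) - omega0 n u v) := by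
  classical
  set B : (Fin n × Fin 2 → ℝ) →ₗ[ℝ] (Fin n × Fin 2 → ℝ) →ₗ[ℝ] ℝ :=
    (omegaBilin n).compl₁₂ Φ Φ - omegaBilin n with hBdef
  have hBapp : ∀ u v, B u v = omega0 n (Φ u) (Φ v) - omega0 n u v := fun u v => rfl
  -- expansion lemmas
  have hsingle : ∀ u : Fin n × Fin 2 → ℝ, u = ∑ j, u j • (Pi.single j 1 : Fin n × Fin 2 → ℝ) := by
    intro u
    funext k
    simp [Finset.sum_apply, Pi.single_apply]
  have expand_right : ∀ x u : Fin n × Fin 2 → ℝ,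
      B x u = ∑ j, u j * B x (Pi.single j 1) := by
    intro x u
    conv_lhs => rw [hsingle u]
    rw [map_sum]
    simp [smul_eq_mul]
  have expand_left : ∀ u y : Fin n × Fin 2 → ℝ,
      B u y = ∑ i, u i * B (Pi.single i 1) y := by
    intro u y
    conv_lhs => rw [hsingle u]
    rw [map_sum]
    simp [LinearMap.sum_apply, LinearMap.smul_apply, smul_eq_mul]
  -- get the normalized kernel vector
  have hker : ∃ v0 : Fin n × Fin 2 → ℝ, Φ v0 = 0 ∧ v0 ≠ 0 := by
    rw [← LinearMap.ker_eq_bot] at hΦ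
    obtain ⟨v0, hv0, hne⟩ := Submodule.exists_mem_ne_zero_of_ne_bot hΦ
    exact ⟨v0, hv0, hne⟩
  obtain ⟨v0, hv0ker, hv0ne⟩ := hker
  have hc : (0:ℝ) < ∑ i, v0 i ^ 2 := by
    have hex : ∃ i, v0 i ≠ 0 := by
      by_contra h
      push_neg at h
      exact hv0ne (funext h)
    obtain ⟨i, hi⟩ := hex
    exact Finset.sum_pos' (fun j _ => sq_nonneg _) ⟨i, Finset.mem_univ i, by positivity⟩
  set c := Real.sqrt (∑ i, v0 i ^ 2) with hcdef
  have hcpos : 0 < c := Real.sqrt_pos.mpr hc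
  set v : Fin n × Fin 2 → ℝ := c⁻¹ • v0 with hvdef
  have hΦv : Φ v = 0 := by rw [hvdef, map_smul, hv0ker, smul_zero]
  have hv2 : ∑ i, v i ^ 2 = 1 := by
    have h1 : ∑ i, v i ^ 2 = (c⁻¹) ^ 2 * ∑ i, v0 i ^ 2 := by
      rw [Finset.mul_sum]
      exact Finset.sum_congr rfl fun i _ => by simp [hvdef]; ring
    rw [h1, inv_pow, hcdef, Real.sq_sqrt hc.le, inv_mul_cancel₀ hc.ne']
  set w : Fin n × Fin 2 → ℝ := fun p => if p.2 = 0 then -v (p.1, 1) else v (p.1, 0) with hwdef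
  have hw0 : ∀ a : Fin n, w (a, 0) = -v (a, 1) := fun a => if_pos rfl
  have hw1 : ∀ a : Fin n, w (a, 1) = v (a, 0) := by
    intro a
    rw [hwdef]
    simp
  have hw2 : ∑ i, w i ^ 2 = 1 := by
    have hv2' := hv2
    rw [Fintype.sum_prod_type] at hv2' ⊢
    simp only [Fin.sum_univ_two] at hv2' ⊢
    simp only [hw0, hw1]
    rw [← hv2']
    exact Finset.sum_congr rfl fun a _ => by ring
  have hvw : ∑ i, v i * w i = 0 := by
    rw [Fintype.sum_prod_type]
    simp only [Fin.sum_univ_two, hw0, hw1]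
    have h : ∀ a : Fin n, v (a, 0) * -v (a, 1) + v (a, 1) * v (a, 0) = 0 := fun a => by ring
    simp only [h, Finset.sum_const_zero]
  have hBv : ∀ x, B x v = ∑ i, x i * w i := by
    intro x
    rw [hBapp, hΦv]
    have h0 : omega0 n (Φ x) 0 = 0 := by simp [omega0]
    rw [h0, zero_sub, omega0, ← Finset.sum_neg_distrib, Fintype.sum_prod_type]
    simp only [Fin.sum_univ_two, hw0, hw1]
    exact Finset.sum_congr rfl fun a _ => by ring
  have hBvw : B v w = -(1:ℝ) := by
    rw [hBapp, hΦv]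
    have h0 : omega0 n 0 (Φ w) = 0 := by simp [omega0]
    rw [h0, zero_sub, neg_inj, omega0]
    have hv2' := hv2
    rw [Fintype.sum_prod_type] at hv2'
    simp only [Fin.sum_univ_two] at hv2'
    simp only [hw0, hw1]
    rw [← hv2']
    exact Finset.sum_congr rfl fun a _ => by ring
  -- row identities
  have hrow : ∀ i, ∑ j, B (Pi.single i 1) (Pi.single j 1) * v j = w i := by
    intro i
    have h3 : ∑ k, (Pi.single i 1 : Fin n × Fin 2 → ℝ) k * w k = w i := by
      simp [Pi.single_apply]
    calc ∑ j, B (Pi.single i 1) (Pi.single j 1) * v j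
        = ∑ j, v j * B (Pi.single i 1) (Pi.single j 1) :=
          Finset.sum_congr rfl fun j _ => mul_comm _ _
      _ = B (Pi.single i 1) v := (expand_right _ _).symm
      _ = ∑ k, (Pi.single i 1 : Fin n × Fin 2 → ℝ) k * w k := hBv _
      _ = w i := h3
  have hrowW : ∀ i, ∑ j, B (Pi.single i 1) (Pi.single j 1) * w j = B (Pi.single i 1) w := by
    intro i
    rw [expand_right (Pi.single i 1) w]
    exact Finset.sum_congr rfl fun j _ => mul_comm _ _
  have hbeta : ∑ i, v i * B (Pi.single i 1) w = -1 := by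
    rw [← expand_left v w, hBvw]
  -- sum estimate
  have hS : (2:ℝ) ≤ ∑ i : Fin n × Fin 2, ∑ j : Fin n × Fin 2,
      (B (Pi.single i 1) (Pi.single j 1)) ^ 2 := by
    have h1 : ∀ i : Fin n × Fin 2, (w i) ^ 2 + (B (Pi.single i 1) w) ^ 2
        ≤ ∑ j, (B (Pi.single i 1) (Pi.single j 1)) ^ 2 := by
      intro i
      have hb := bessel_two (fun j => B (Pi.single i 1) (Pi.single j 1)) v w hv2 hw2 hvw
      rw [hrow i, hrowW i] at hb
      exact hb
    have h2 : ∑ i, ((w i) ^ 2 + (B (Pi.single i 1) w) ^ 2)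
        ≤ ∑ i : Fin n × Fin 2, ∑ j : Fin n × Fin 2, (B (Pi.single i 1) (Pi.single j 1)) ^ 2 :=
      Finset.sum_le_sum fun i _ => h1 i
    rw [Finset.sum_add_distrib, hw2] at h2
    have hcs := Finset.sum_mul_sq_le_sq_mul_sq Finset.univ v
      (fun i => B (Pi.single i 1) w)
    rw [hbeta, hv2, one_mul] at hcs
    norm_num at hcs
    linarith
  rw [eucNorm2]
  conv_lhs => rw [← Real.sqrt_one]
  apply Real.sqrt_le_sqrt
  simp only [← hBapp]
  linarith
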